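/- Let G be a finite simple graph, let A ⊆ V be a critical set (i.e., d(A) = d_c(G)), and let S₀ be an inclusion-minimal independent set with d(S₀) > 0. Then S₀ ⊆ A. In particular, every inclusion-minimal independent set with positive difference is contained in ker(G). -/

import Mathlib

open Finset

namespace CritGraph

variable {V : Type*} [Fintype V] [DecidableEq V]

/-- The neighborhood of a set of vertices `X`:
all vertices having at least one neighbor in `X`. -/
def nbhd (G : SimpleGraph V) [DecidableRel G.Adj] (X : Finset V) : Finset V :=
  univ.filter fun v => ∃ x ∈ X, G.Adj v x

/-- The difference `d(X) = |X| - |N(X)|` of a set of vertices `X`. -/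
def diff (G : SimpleGraph V) [DecidableRel G.Adj] (X : Finset V) : ℤ :=
  (X.card : ℤ) - ((nbhd G X).card : ℤ)

/-- A set of vertices is independent if no two of its vertices are adjacent. -/
def IsIndep (G : SimpleGraph V) (S : Finset V) : Prop :=
  ∀ u ∈ S, ∀ v ∈ S, ¬ G.Adj u v

instance (G : SimpleGraph V) [DecidableRel G.Adj] : DecidablePred (IsIndep G) := fun S =>
  inferInstanceAs (Decidable (∀ u ∈ S, ∀ v ∈ S, ¬ G.Adj u v))

/-- The critical difference `d_c(G) = max {d(X) : X ⊆ V}`. -/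
def dC (G : SimpleGraph V) [DecidableRel G.Adj] : ℤ :=
  (univ : Finset V).powerset.sup' (Finset.powerset_nonempty _) (diff G)

/-- The critical independence difference `id_c(G) = max {d(I) : I independent}`. -/
def idC (G : SimpleGraph V) [DecidableRel G.Adj] : ℤ :=
  ((univ : Finset V).powerset.filter (IsIndep G)).sup'
    ⟨∅, by simp [IsIndep]⟩ (diff G)

/-- `A` is a critical independent set: `A` is independent and
`d(A) = max {d(I) : I independent}`. -/
def IsCritIndep (G : SimpleGraph V) [DecidableRel G.Adj] (A : Finset V) : Prop :=
  IsIndep G A ∧ ∀ I : Finset V, IsIndep G I → diff G I ≤ diff G A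

instance (G : SimpleGraph V) [DecidableRel G.Adj] : DecidablePred (IsCritIndep G) := fun A =>
  inferInstanceAs (Decidable (IsIndep G A ∧ ∀ I : Finset V, IsIndep G I → diff G I ≤ diff G A))

/-- `ker(G)`: the intersection of all critical independent sets of `G`. -/
def kerG (G : SimpleGraph V) [DecidableRel G.Adj] : Finset V :=
  univ.filter fun v => ∀ A : Finset V, IsCritIndep G A → v ∈ A

/-- `G - v`: the induced subgraph of `G` on `V \ {v}`. -/
def deleteVert (G : SimpleGraph V) (v : V) : SimpleGraph {u : V // u ≠ v} :=
  G.comap Subtype.val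

instance (G : SimpleGraph V) (v : V) [DecidableRel G.Adj] :
    DecidableRel (deleteVert G v).Adj := fun a b =>
  inferInstanceAs (Decidable (G.Adj a.val b.val))

/-- `S` is an inclusion-minimal independent set with positive difference. -/
def MinPosIndep (G : SimpleGraph V) [DecidableRel G.Adj] (S : Finset V) : Prop :=
  IsIndep G S ∧ 0 < diff G S ∧ ∀ S' ⊂ S, ¬ (IsIndep G S' ∧ 0 < diff G S')

/-- `S` is a maximum independent set. -/
def IsMaxIndep (G : SimpleGraph V) (S : Finset V) : Prop :=
  IsIndep G S ∧ ∀ I : Finset V, IsIndep G I → I.card ≤ S.card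

instance (G : SimpleGraph V) [DecidableRel G.Adj] : DecidablePred (IsMaxIndep G) := fun S =>
  inferInstanceAs (Decidable (IsIndep G S ∧ ∀ I : Finset V, IsIndep G I → I.card ≤ S.card))

/-- `core(G)`: the intersection of all maximum independent sets of `G`. -/
def coreG (G : SimpleGraph V) [DecidableRel G.Adj] : Finset V :=
  univ.filter fun v => ∀ A : Finset V, IsMaxIndep G A → v ∈ A


lemma nbhd_mono (G : SimpleGraph V) [DecidableRel G.Adj] {X Y : Finset V} (h : X ⊆ Y) :
    nbhd G X ⊆ nbhd G Y := by
  intro v hv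
  simp only [nbhd, mem_filter, mem_univ, true_and] at hv ⊢
  obtain ⟨x, hx, hadj⟩ := hv
  exact ⟨x, h hx, hadj⟩

lemma nbhd_union (G : SimpleGraph V) [DecidableRel G.Adj] (X Y : Finset V) :
    nbhd G (X ∪ Y) = nbhd G X ∪ nbhd G Y := by
  ext v
  simp only [nbhd, mem_filter, mem_univ, true_and, mem_union]
  constructor
  · rintro ⟨x, hx | hx, hadj⟩
    · exact Or.inl ⟨x, hx, hadj⟩
    · exact Or.inr ⟨x, hx, hadj⟩
  · rintro (⟨x, hx, hadj⟩ | ⟨x, hx, hadj⟩)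
    · exact ⟨x, Or.inl hx, hadj⟩
    · exact ⟨x, Or.inr hx, hadj⟩

lemma diff_supermod (G : SimpleGraph V) [DecidableRel G.Adj] (X Y : Finset V) :
    diff G X + diff G Y ≤ diff G (X ∪ Y) + diff G (X ∩ Y) := by
  have hc : (X ∪ Y).card + (X ∩ Y).card = X.card + Y.card :=
    card_union_add_card_inter X Y
  have hsub : nbhd G (X ∩ Y) ⊆ nbhd G X ∩ nbhd G Y :=
    subset_inter (nbhd_mono G inter_subset_left) (nbhd_mono G inter_subset_right)
  have hn : (nbhd G (X ∪ Y)).card + (nbhd G (X ∩ Y)).card ≤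
      (nbhd G X).card + (nbhd G Y).card := by
    calc (nbhd G (X ∪ Y)).card + (nbhd G (X ∩ Y)).card
        ≤ (nbhd G X ∪ nbhd G Y).card + (nbhd G X ∩ nbhd G Y).card := by
          rw [nbhd_union]
          exact Nat.add_le_add_left (card_le_card hsub) _
      _ = (nbhd G X).card + (nbhd G Y).card := card_union_add_card_inter _ _
  simp only [diff]
  push_cast
  have hc' : ((X ∪ Y).card : ℤ) + (X ∩ Y).card = X.card + Y.card := by exact_mod_cast hc
  have hn' : ((nbhd G (X ∪ Y)).card : ℤ) + (nbhd G (X ∩ Y)).card ≤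
      (nbhd G X).card + (nbhd G Y).card := by exact_mod_cast hn
  linarith

lemma isIndep_subset (G : SimpleGraph V) {S S' : Finset V} (h : S' ⊆ S)
    (hS : IsIndep G S) : IsIndep G S' :=
  fun u hu v hv => hS u (h hu) v (h hv)

lemma subset_of_crit (G : SimpleGraph V) [DecidableRel G.Adj] {A S₀ : Finset V}
    (hA : ∀ X : Finset V, diff G X ≤ diff G A) (hS : MinPosIndep G S₀) : S₀ ⊆ A := by
  have h1 := diff_supermod G A S₀
  have h2 := hA (A ∪ S₀)
  have hpos : 0 < diff G (A ∩ S₀) := by linarith [hS.2.1]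
  by_contra hcon
  have hss : A ∩ S₀ ⊂ S₀ := by
    refine ⟨inter_subset_right, fun h => ?_⟩
    exact hcon fun v hv => (mem_inter.mp (h hv)).1
  exact hS.2.2 _ hss ⟨isIndep_subset G inter_subset_right (hS.1), hpos⟩

lemma diff_le_dC (G : SimpleGraph V) [DecidableRel G.Adj] (X : Finset V) :
    diff G X ≤ dC G :=
  le_sup' (diff G) (mem_powerset.mpr (subset_univ X))

/-- There is an independent set whose difference is at least `diff G A`:
namely `A \ N(A)`. -/
lemma exists_indep_diff_ge (G : SimpleGraph V) [DecidableRel G.Adj] (A : Finset V) :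
    ∃ I : Finset V, IsIndep G I ∧ diff G A ≤ diff G I := by
  refine ⟨A \ nbhd G A, ?_, ?_⟩
  · intro u hu v hv hadj
    rw [mem_sdiff] at hu hv
    exact hu.2 (by simp only [nbhd, mem_filter, mem_univ, true_and]; exact ⟨v, hv.1, hadj⟩)
  · have hNsub : nbhd G (A \ nbhd G A) ⊆ nbhd G A \ A := by
      intro v hv
      obtain ⟨x, hx, hadj⟩ := (mem_filter.mp hv).2
      rw [mem_sdiff] at hx
      rw [mem_sdiff]
      constructor
      · simp only [nbhd, mem_filter, mem_univ, true_and]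
        exact ⟨x, hx.1, hadj⟩
      · intro hvA
        apply hx.2
        simp only [nbhd, mem_filter, mem_univ, true_and]
        exact ⟨v, hvA, hadj.symm⟩
    have h1 : (A \ nbhd G A).card + (A ∩ nbhd G A).card = A.card :=
      card_sdiff_add_card_inter A (nbhd G A)
    have h2 : (nbhd G A \ A).card + (nbhd G A ∩ A).card = (nbhd G A).card :=
      card_sdiff_add_card_inter (nbhd G A) A
    have h3 : (nbhd G (A \ nbhd G A)).card ≤ (nbhd G A \ A).card := card_le_card hNsub
    have h4 : (A ∩ nbhd G A).card = (nbhd G A ∩ A).card := by rw [inter_comm]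
    simp only [diff]
    have h1' : ((A \ nbhd G A).card : ℤ) + (A ∩ nbhd G A).card = A.card := by
      exact_mod_cast h1
    have h2' : ((nbhd G A \ A).card : ℤ) + (nbhd G A ∩ A).card = (nbhd G A).card := by
      exact_mod_cast h2
    have h3' : ((nbhd G (A \ nbhd G A)).card : ℤ) ≤ (nbhd G A \ A).card := by
      exact_mod_cast h3
    have h4' : ((A ∩ nbhd G A).card : ℤ) = (nbhd G A ∩ A).card := by exact_mod_cast h4
    linarith

/-- Every inclusion-minimal independent set with positive difference is contained in
every critical set; in particular, it is contained in `ker(G)`. -/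
theorem minPosIndep_subset_critical (G : SimpleGraph V) [DecidableRel G.Adj]
    (A S₀ : Finset V) (hA : diff G A = dC G) (hS : MinPosIndep G S₀) :
    S₀ ⊆ A ∧ S₀ ⊆ kerG G := by
  constructor
  · exact subset_of_crit G (fun X => hA ▸ diff_le_dC G X) hS
  · intro v hv
    simp only [kerG, mem_filter, mem_univ, true_and]
    intro B hB
    have hBall : ∀ X : Finset V, diff G X ≤ diff G B := by
      intro X
      obtain ⟨I, hI, hIdiff⟩ := exists_indep_diff_ge G A
      calc diff G X ≤ dC G := diff_le_dC G X
        _ = diff G A := hA.symm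
        _ ≤ diff G I := hIdiff
        _ ≤ diff G B := hB.2 I hI
    exact subset_of_crit G hBall hS hv

end CritGraph
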